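/- Let ε > 0, α > 0, c ∈ [0,1], and x > 0. With p₀(t) := (x/√(2π))t^{−3/2}e^{−x²/(2t)} and p¹(t) := (1 + ε(cx + (1 − e^{−2αx})(αt − x)/(2αx)))·p₀(t) − ε(α/4)(1 − e^{−2αx})·e^{α²t/2 + αx}·Erfc(x/√(2t) + α√(t/2)), the function t ↦ t·p¹(t) is not Lebesgue integrable on (0, ∞); i.e. the first moment of the perturbed first passage time law is infinite. -/

import Mathlib

set_option maxHeartbeats 1000000


open MeasureTheory

/-- The complementary error function `Erfc(z) = (2/√π) ∫_z^∞ e^{−y²} dy`. -/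
noncomputable def Erfc (z : ℝ) : ℝ :=
  (2 / Real.sqrt Real.pi) * ∫ y in Set.Ioi z, Real.exp (-y ^ 2)

lemma integral_Ioi_mul_exp_neg_sq (z : ℝ) :
    ∫ y in Set.Ioi z, y * Real.exp (-y ^ 2) = Real.exp (-z ^ 2) / 2 := by
  have hint : IntegrableOn (fun y : ℝ => y * Real.exp (-y ^ 2)) (Set.Ioi z) := by
    have := integrable_mul_exp_neg_mul_sq (b := 1) one_pos
    simpa using this.integrableOn
  have h := integral_Ioi_of_hasDerivAt_of_tendsto' (a := z) (m := 0)
    (f := fun y : ℝ => -Real.exp (-y ^ 2) / 2)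
    (f' := fun y : ℝ => y * Real.exp (-y ^ 2))
    (fun y _ => by
      have h1 : HasDerivAt (fun y : ℝ => -y ^ 2) (-(2 * y)) y := by
        exact ((hasDerivAt_pow 2 y).neg).congr_deriv (by norm_num)
      have := (h1.exp).neg.div_const 2
      exact this.congr_deriv (by ring)) hint ?_
  · rw [h]; ring
  · have h1 : Filter.Tendsto (fun y : ℝ => -y ^ 2) Filter.atTop Filter.atBot := by
      simpa using (Filter.tendsto_pow_atTop (two_ne_zero)).neg
    have h2 := (Real.tendsto_exp_atBot.comp h1).neg.div_const 2
    simpa using h2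

lemma Erfc_le {z : ℝ} (hz : 0 < z) :
    Erfc z ≤ Real.exp (-z ^ 2) / (z * Real.sqrt Real.pi) := by
  have hexp : IntegrableOn (fun y : ℝ => Real.exp (-y ^ 2)) (Set.Ioi z) := by
    have := integrable_exp_neg_mul_sq (b := 1) one_pos
    simpa using this.integrableOn
  have hmul : IntegrableOn (fun y : ℝ => y * Real.exp (-y ^ 2) / z) (Set.Ioi z) := by
    have := integrable_mul_exp_neg_mul_sq (b := 1) one_pos
    simpa using (this.div_const z).integrableOn
  have hle : ∫ y in Set.Ioi z, Real.exp (-y ^ 2) ≤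
      ∫ y in Set.Ioi z, y * Real.exp (-y ^ 2) / z := by
    apply setIntegral_mono_on hexp hmul measurableSet_Ioi
    intro y hy
    have hy' : z < y := hy
    rw [← sub_nonneg]
    have : y * Real.exp (-y ^ 2) / z - Real.exp (-y ^ 2) =
        Real.exp (-y ^ 2) * ((y - z) / z) := by field_simp
    rw [this]
    exact mul_nonneg (Real.exp_nonneg _) (div_nonneg (by linarith) hz.le)
  have hI : ∫ y in Set.Ioi z, y * Real.exp (-y ^ 2) / z = Real.exp (-z ^ 2) / 2 / z := by
    rw [integral_div, integral_Ioi_mul_exp_neg_sq]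
  have hπ : 0 < Real.sqrt Real.pi := Real.sqrt_pos.mpr Real.pi_pos
  have h2 : Erfc z ≤ (2 / Real.sqrt Real.pi) * (Real.exp (-z ^ 2) / 2 / z) := by
    rw [Erfc]
    apply mul_le_mul_of_nonneg_left _ (by positivity)
    rw [← hI]; exact hle
  calc Erfc z ≤ (2 / Real.sqrt Real.pi) * (Real.exp (-z ^ 2) / 2 / z) := h2
    _ = Real.exp (-z ^ 2) / (z * Real.sqrt Real.pi) := by field_simp

/-- The first moment of the perturbed FPT law is infinite: `t ↦ t p¹(t)` is not
Lebesgue integrable on `(0, ∞)`. -/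
theorem perturbed_density_infinite_mean
    (ε α c x : ℝ) (hε : 0 < ε) (hα : 0 < α) (hc0 : 0 ≤ c) (hc1 : c ≤ 1) (hx : 0 < x)
    (p₀ p₁ : ℝ → ℝ)
    (hp₀ : ∀ t : ℝ, 0 < t → p₀ t =
      (x / Real.sqrt (2 * Real.pi)) * t ^ (-(3 : ℝ) / 2) * Real.exp (-x ^ 2 / (2 * t)))
    (hp₁ : ∀ t : ℝ, 0 < t → p₁ t =
      (1 + ε * (c * x + (1 - Real.exp (-2 * α * x)) * (α * t - x) / (2 * α * x))) * p₀ t -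
        ε * (α / 4) * (1 - Real.exp (-2 * α * x)) *
          Real.exp (α ^ 2 * t / 2 + α * x) *
          Erfc (x / Real.sqrt (2 * t) + α * Real.sqrt (t / 2))) :
    ¬ IntegrableOn (fun t : ℝ => t * p₁ t) (Set.Ioi 0) volume := by
  intro hInt
  set E : ℝ := 1 - Real.exp (-2 * α * x) with hEdef
  have hE : 0 < E := by
    have h1 : Real.exp (-2 * α * x) < 1 := by
      rw [Real.exp_lt_one_iff]; nlinarith
    simp only [hEdef]; linarith
  set T : ℝ := max 1 (ε * E * x / α ^ 2) with hTdef
  have hT1 : (1 : ℝ) ≤ T := le_max_left _ _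
  have hTge : ε * E * x / α ^ 2 ≤ T := le_max_right _ _
  have hT0 : (0 : ℝ) < T := lt_of_lt_of_le one_pos hT1
  have hu : (0 : ℝ) < Real.sqrt (2 * Real.pi) := Real.sqrt_pos.mpr (by positivity)
  have hπ : (0 : ℝ) < Real.sqrt Real.pi := Real.sqrt_pos.mpr Real.pi_pos
  set C : ℝ := Real.exp (-x ^ 2 / 2) * x / (2 * Real.sqrt (2 * Real.pi)) with hCdef
  have hC0 : (0 : ℝ) < C := by rw [hCdef]; positivity
  clear_value E T C
  -- the key pointwise lower bound
  have key : ∀ t ∈ Set.Ioi T, ‖C * t ^ (-(1 : ℝ) / 2)‖ ≤ t * p₁ t := by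
    intro t htT
    have htT' : T < t := htT
    have ht1 : (1 : ℝ) ≤ t := le_trans hT1 htT'.le
    have ht : (0 : ℝ) < t := lt_of_lt_of_le one_pos ht1
    have htε : ε * E * x / α ^ 2 ≤ t := le_trans hTge htT'.le
    have hs0 : (0 : ℝ) < Real.sqrt t := Real.sqrt_pos.mpr ht
    have h2t : (0 : ℝ) < Real.sqrt (2 * t) := Real.sqrt_pos.mpr (by positivity)
    have hxat : (0 : ℝ) < x + α * t := by positivity
    rw [Real.norm_of_nonneg (mul_nonneg hC0.le (Real.rpow_nonneg ht.le _))]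
    rw [hp₁ t ht, hp₀ t ht]
    have h12 : t ^ (-(1 : ℝ) / 2) = 1 / Real.sqrt t := by
      rw [show (-(1:ℝ)/2) = -(1/2) by norm_num, Real.rpow_neg ht.le, ← Real.sqrt_eq_rpow]
      simp
    have h32 : t ^ (-(3 : ℝ) / 2) = 1 / (t * Real.sqrt t) := by
      rw [show (-(3:ℝ)/2) = -(1 + 1/2) by norm_num, Real.rpow_neg ht.le, Real.rpow_add ht,
        Real.rpow_one, ← Real.sqrt_eq_rpow]
      simp
    rw [h12, h32]
    set s : ℝ := Real.sqrt t with hsdef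
    have hs2 : s ^ 2 = t := Real.sq_sqrt ht.le
    set D : ℝ := Real.exp (-x ^ 2 / (2 * t)) with hDdef
    have hD0 : (0 : ℝ) < D := by rw [hDdef]; exact Real.exp_pos _
    clear_value s D
    -- z = (x + αt)/√(2t)
    have hz : x / Real.sqrt (2 * t) + α * Real.sqrt (t / 2) =
        (x + α * t) / Real.sqrt (2 * t) := by
      have h1 : Real.sqrt (t / 2) * Real.sqrt (2 * t) = t := by
        rw [← Real.sqrt_mul (by positivity), show t / 2 * (2 * t) = t ^ 2 by ring,
          Real.sqrt_sq ht.le]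
      have h1' : Real.sqrt (t / 2) = t / Real.sqrt (2 * t) := by
        rw [eq_div_iff h2t.ne']; exact h1
      rw [h1']
      field_simp
    have hw : (0 : ℝ) < (x + α * t) / Real.sqrt (2 * t) := by positivity
    -- the Erfc upper bound, rearranged
    have hBB : Real.exp (α ^ 2 * t / 2 + α * x) *
        Erfc (x / Real.sqrt (2 * t) + α * Real.sqrt (t / 2)) ≤
        D * (2 * s) / ((x + α * t) * Real.sqrt (2 * Real.pi)) := by
      rw [hz]
      have h1 := Erfc_le hw
      have h2 : Real.exp (α ^ 2 * t / 2 + α * x) *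
          (Real.exp (-((x + α * t) / Real.sqrt (2 * t)) ^ 2) /
            ((x + α * t) / Real.sqrt (2 * t) * Real.sqrt Real.pi)) =
          D * (2 * s) / ((x + α * t) * Real.sqrt (2 * Real.pi)) := by
        have hsq : ((x + α * t) / Real.sqrt (2 * t)) ^ 2 = (x + α * t) ^ 2 / (2 * t) := by
          rw [div_pow, Real.sq_sqrt (by positivity : (0:ℝ) ≤ 2 * t)]
        rw [hsq, ← mul_div_assoc]
        rw [show Real.exp (α ^ 2 * t / 2 + α * x) *
            Real.exp (-((x + α * t) ^ 2 / (2 * t))) =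
            Real.exp (α ^ 2 * t / 2 + α * x + -((x + α * t) ^ 2 / (2 * t))) from
          (Real.exp_add _ _).symm]
        rw [show α ^ 2 * t / 2 + α * x + -((x + α * t) ^ 2 / (2 * t)) = -x ^ 2 / (2 * t) by
          field_simp; ring]
        have h2π : Real.sqrt (2 * Real.pi) = Real.sqrt 2 * Real.sqrt Real.pi :=
          Real.sqrt_mul (by norm_num) _
        have h2ts : Real.sqrt (2 * t) = Real.sqrt 2 * s := by
          rw [hsdef]; exact Real.sqrt_mul (by norm_num) _
        have hq0 : (0 : ℝ) < Real.sqrt 2 := by positivity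
        have hqq : Real.sqrt 2 * Real.sqrt 2 = 2 :=
          Real.mul_self_sqrt (by norm_num)
        rw [h2π, h2ts, ← hDdef]
        field_simp
        linear_combination hqq
      rw [← h2]
      exact mul_le_mul_of_nonneg_left h1 (Real.exp_nonneg _)
    -- replacing the Erfc term by its upper bound
    have e3 : t * ((1 + ε * (c * x + E * (α * t - x) / (2 * α * x))) *
          (x / Real.sqrt (2 * Real.pi) * (1 / (t * s)) * D)) -
        t * (ε * (α / 4) * E * (D * (2 * s) / ((x + α * t) * Real.sqrt (2 * Real.pi)))) ≤
        t * ((1 + ε * (c * x + E * (α * t - x) / (2 * α * x))) *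
          (x / Real.sqrt (2 * Real.pi) * (1 / (t * s)) * D) -
          ε * (α / 4) * E * Real.exp (α ^ 2 * t / 2 + α * x) *
            Erfc (x / Real.sqrt (2 * t) + α * Real.sqrt (t / 2))) := by
      rw [mul_sub]
      have h7 : ε * (α / 4) * E * Real.exp (α ^ 2 * t / 2 + α * x) *
          Erfc (x / Real.sqrt (2 * t) + α * Real.sqrt (t / 2)) ≤
          ε * (α / 4) * E * (D * (2 * s) / ((x + α * t) * Real.sqrt (2 * Real.pi))) := by
        rw [mul_assoc (ε * (α / 4) * E)]
        exact mul_le_mul_of_nonneg_left hBB (by positivity)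
      have h8 := mul_le_mul_of_nonneg_left h7 ht.le
      linarith
    -- exact algebraic identity for the lower bound
    have hxat' : x + α * s ^ 2 ≠ 0 := by rw [hs2]; exact hxat.ne'
    have e2 : t * ((1 + ε * (c * x + E * (α * t - x) / (2 * α * x))) *
          (x / Real.sqrt (2 * Real.pi) * (1 / (t * s)) * D)) -
        t * (ε * (α / 4) * E * (D * (2 * s) / ((x + α * t) * Real.sqrt (2 * Real.pi)))) =
        D * (x + ε * c * x ^ 2 - ε * E * x ^ 2 / (2 * α * (x + α * t))) /
          (Real.sqrt (2 * Real.pi) * s) := by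
      rw [← hs2]
      field_simp
      ring
    -- the bracket is at least x/2 and D ≥ exp(-x²/2)
    have hD1 : Real.exp (-x ^ 2 / 2) ≤ D := by
      rw [hDdef]
      apply Real.exp_le_exp.mpr
      rw [neg_div, neg_div, neg_le_neg_iff, div_le_div_iff₀ (by positivity) (by norm_num)]
      nlinarith [sq_nonneg x]
    have h6 : ε * E * x ^ 2 / (2 * α * (x + α * t)) ≤ x / 2 := by
      rw [div_le_div_iff₀ (by positivity) (by norm_num)]
      have h9 : ε * E * x ≤ α ^ 2 * t := by
        rw [div_le_iff₀ (by positivity)] at htε; linarith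
      nlinarith [mul_le_mul_of_nonneg_right h9 hx.le,
        mul_nonneg hα.le (mul_nonneg hx.le hx.le)]
    have hbr : x / 2 ≤ x + ε * c * x ^ 2 - ε * E * x ^ 2 / (2 * α * (x + α * t)) := by
      have h10 : 0 ≤ ε * c * x ^ 2 := by positivity
      linarith
    have e1core : Real.exp (-x ^ 2 / 2) * (x / 2) ≤
        D * (x + ε * c * x ^ 2 - ε * E * x ^ 2 / (2 * α * (x + α * t))) :=
      mul_le_mul hD1 hbr (by positivity) hD0.le
    have e1 : C * (1 / s) ≤
        D * (x + ε * c * x ^ 2 - ε * E * x ^ 2 / (2 * α * (x + α * t))) /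
          (Real.sqrt (2 * Real.pi) * s) := by
      have hfrm : C * (1 / s) = Real.exp (-x ^ 2 / 2) * (x / 2) /
          (Real.sqrt (2 * Real.pi) * s) := by
        rw [hCdef]; field_simp
      rw [hfrm]
      apply div_le_div_of_nonneg_right e1core
      positivity
    linarith [e1, e2, e3]
  -- conclude: comparison with a non-integrable power
  have hmeas : AEStronglyMeasurable (fun t : ℝ => C * t ^ (-(1 : ℝ) / 2))
      (volume.restrict (Set.Ioi T)) := by
    apply ContinuousOn.aestronglyMeasurable _ measurableSet_Ioi
    apply ContinuousOn.mul continuousOn_const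
    apply ContinuousOn.rpow_const continuousOn_id
    intro t htT
    exact Or.inl (ne_of_gt (lt_trans hT0 htT))
  have hmono : IntegrableOn (fun t : ℝ => t * p₁ t) (Set.Ioi T) volume :=
    hInt.mono_set (Set.Ioi_subset_Ioi hT0.le)
  have hf : IntegrableOn (fun t : ℝ => C * t ^ (-(1 : ℝ) / 2)) (Set.Ioi T) volume := by
    apply hmono.mono' hmeas
    filter_upwards [self_mem_ae_restrict measurableSet_Ioi] with t htT using key t htT
  have hf' : IntegrableOn (fun t : ℝ => t ^ (-(1 : ℝ) / 2)) (Set.Ioi T) volume := by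
    have h11 := hf.const_mul C⁻¹
    have h12 : (fun t : ℝ => C⁻¹ * (C * t ^ (-(1 : ℝ) / 2))) =
        fun t : ℝ => t ^ (-(1 : ℝ) / 2) := by
      funext t; rw [← mul_assoc, inv_mul_cancel₀ hC0.ne', one_mul]
    rwa [h12] at h11
  rw [integrableOn_Ioi_rpow_iff hT0] at hf'
  norm_num at hf'
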